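/- Let k be a field of characteristic 3, K = k(t_1,...,t_n), and Y ⊂ P^{n+1} the cubic hypersurface y^3 − y z^2 = Σ t_i x_i^3. Then the only K-points of Y are (0:1:0:...:0), (1:1:0:...:0), and (1:−1:0:...:0). -/

import Mathlib

open MvPolynomial

section Aux

variable {k : Type*} [Field k] [CharP k 3] {n : ℕ}

private lemma cube_pderiv_zero (f : MvPolynomial (Fin n) k) (j : Fin n) :
    (pderiv j) (f ^ 3) = 0 := by
  rw [pderiv_pow]
  have h3 : ((3 : ℕ) : MvPolynomial (Fin n) k) = 0 := by
    exact_mod_cast CharP.cast_eq_zero (MvPolynomial (Fin n) k) 3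
  simp only [h3]
  ring

private lemma pderiv_sum_cubes (Xv : Fin n → MvPolynomial (Fin n) k) (j : Fin n) :
    (pderiv j) (∑ i, X i * Xv i ^ 3) = Xv j ^ 3 := by
  rw [map_sum]
  rw [Finset.sum_eq_single j]
  · rw [pderiv_mul, cube_pderiv_zero, pderiv_X_self]
    ring
  · intro i _ hij
    rw [pderiv_mul, cube_pderiv_zero, pderiv_X_of_ne hij]
    ring
  · intro h; exact absurd (Finset.mem_univ j) h

private lemma deriv_rel {Y Z : MvPolynomial (Fin n) k} {Xv : Fin n → MvPolynomial (Fin n) k}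
    (hE : Y ^ 3 - Y * Z ^ 2 = ∑ i, X i * Xv i ^ 3) (j : Fin n) :
    Xv j ^ 3 = Z * (-(pderiv j Y * Z) - 2 * Y * pderiv j Z) := by
  have h := congrArg (pderiv j) hE
  rw [map_sub, cube_pderiv_zero, pderiv_mul, pderiv_pow, pderiv_sum_cubes] at h
  push_cast at h
  linear_combination -h

private lemma pderiv_support_bound {f : MvPolynomial (Fin n) k} {j : Fin n} {m : Fin n →₀ ℕ}
    (hm : m ∈ (pderiv j f).support) :
    m.sum (fun _ e => e) + 1 ≤ f.totalDegree := by
  rw [mem_support_iff] at hm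
  have hrepr : pderiv j f
      = ∑ v ∈ f.support, monomial (v - Finsupp.single j 1) (f.coeff v * (v j : k)) := by
    conv_lhs => rw [f.as_sum]
    rw [map_sum]
    exact Finset.sum_congr rfl fun v _ => pderiv_monomial
  rw [hrepr, MvPolynomial.coeff_sum] at hm
  obtain ⟨v, hv, hne⟩ := Finset.exists_ne_zero_of_sum_ne_zero hm
  rw [coeff_monomial] at hne
  split_ifs at hne with heq
  · have hvj : v j ≠ 0 := by
      intro h0
      apply hne
      simp [h0]
    have hle : Finsupp.single j 1 ≤ v := by
      rw [Finsupp.single_le_iff]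
      omega
    have hadd : m + Finsupp.single j 1 = v := by
      rw [← heq]; exact tsub_add_cancel_of_le hle
    have hsum : v.sum (fun _ e => e) = m.sum (fun _ e => e) + 1 := by
      rw [← hadd, Finsupp.sum_add_index (by simp) (by simp)]
      simp [Finsupp.sum_single_index]
    rw [← hsum]
    exact MvPolynomial.le_totalDegree hv
  · exact absurd rfl hne

private lemma cube_totalDegree {f : MvPolynomial (Fin n) k} (hf : f ≠ 0) :
    (f ^ 3).totalDegree = 3 * f.totalDegree := by
  haveI : Fact (Nat.Prime 3) := ⟨by norm_num⟩
  refine le_antisymm ((totalDegree_pow f 3).trans (le_of_eq rfl)) ?_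
  obtain ⟨m₀, hm₀, hdeg⟩ : ∃ m₀ ∈ f.support, m₀.sum (fun _ e => e) = f.totalDegree := by
    have hne : f.support.Nonempty := by rwa [MvPolynomial.support_nonempty]
    obtain ⟨m₀, hm₀, h⟩ := Finset.exists_mem_eq_sup f.support hne (fun m => m.sum fun _ e => e)
    exact ⟨m₀, hm₀, h.symm⟩
  have hcube : f ^ 3 = ∑ v ∈ f.support, monomial (3 • v) (f.coeff v ^ 3) := by
    conv_lhs => rw [f.as_sum]
    rw [sum_pow_char (p := 3)]
    exact Finset.sum_congr rfl fun v _ => monomial_pow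
  have hc : (f ^ 3).coeff (3 • m₀) = f.coeff m₀ ^ 3 := by
    rw [hcube, MvPolynomial.coeff_sum]
    rw [Finset.sum_eq_single m₀]
    · rw [coeff_monomial, if_pos rfl]
    · intro v _ hv
      rw [coeff_monomial, if_neg]
      intro h
      apply hv
      ext a
      have := DFunLike.congr_fun h a
      simp only [Finsupp.smul_apply, smul_eq_mul] at this
      omega
    · intro h; exact absurd hm₀ h
  have hmem : 3 • m₀ ∈ (f ^ 3).support := by
    rw [mem_support_iff, hc]
    exact pow_ne_zero _ (by rwa [← mem_support_iff])
  have hle := MvPolynomial.le_totalDegree hmem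
  calc 3 * f.totalDegree = (3 • m₀).sum (fun _ e => e) := by
        rw [← hdeg, Finsupp.sum_smul_index (fun i => by simp), Finsupp.mul_sum]
      _ ≤ (f ^ 3).totalDegree := hle

private lemma neg_totalDegree (f : MvPolynomial (Fin n) k) :
    (-f).totalDegree = f.totalDegree := by
  unfold MvPolynomial.totalDegree
  rw [MvPolynomial.support_neg]

private lemma case_one (Y : MvPolynomial (Fin n) k) (Xv : Fin n → MvPolynomial (Fin n) k)
    (hE : Y ^ 3 - Y * 1 ^ 2 = ∑ i, X i * Xv i ^ 3) : ∀ j, Xv j = 0 := by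
  classical
  by_contra hcon
  push_neg at hcon
  obtain ⟨j, hj⟩ := hcon
  rw [one_pow, mul_one] at hE
  -- pick index with maximal degree among nonzero entries
  set s : Finset (Fin n) := Finset.univ.filter (fun i => Xv i ≠ 0) with hs
  have hsne : s.Nonempty := ⟨j, by simp [hs, hj]⟩
  obtain ⟨j₀, hj₀s, hmax⟩ := Finset.exists_max_image s (fun i => (Xv i).totalDegree) hsne
  have hj₀ : Xv j₀ ≠ 0 := by
    have := hj₀s; rw [hs, Finset.mem_filter] at this; exact this.2
  set d := (Xv j₀).totalDegree with hd
  have hdle : ∀ i, (Xv i).totalDegree ≤ d := by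
    intro i
    by_cases hi : Xv i = 0
    · simp [hi]
    · exact hmax i (by simp [hs, hi])
  set S := ∑ i, X i * Xv i ^ 3 with hSdef
  -- lower bound on deg S
  have hcube_ne : Xv j₀ ^ 3 ≠ 0 := pow_ne_zero _ hj₀
  have hpd : pderiv j₀ S = Xv j₀ ^ 3 := pderiv_sum_cubes Xv j₀
  have hlow : 3 * d + 1 ≤ S.totalDegree := by
    have hne : (pderiv j₀ S).support.Nonempty := by
      rw [MvPolynomial.support_nonempty, hpd]; exact hcube_ne
    obtain ⟨m, hm, hmd⟩ := Finset.exists_mem_eq_sup _ hne (fun m : Fin n →₀ ℕ => m.sum fun _ e => e)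
    have h1 : m.sum (fun _ e => e) = 3 * d := by
      have : (pderiv j₀ S).totalDegree = 3 * d := by
        rw [hpd, cube_totalDegree hj₀]
      rw [← this, MvPolynomial.totalDegree, ← hmd]
    have := pderiv_support_bound hm
    omega
  -- upper bound on deg S
  have hup : S.totalDegree ≤ 3 * d + 1 := by
    refine (totalDegree_finset_sum _ _).trans (Finset.sup_le fun i _ => ?_)
    refine (totalDegree_mul _ _).trans ?_
    have h1 : (X i : MvPolynomial (Fin n) k).totalDegree = 1 := totalDegree_X i
    have h2 : (Xv i ^ 3).totalDegree ≤ 3 * d :=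
      (totalDegree_pow _ _).trans (by have := hdle i; omega)
    omega
  have hS : S.totalDegree = 3 * d + 1 := le_antisymm hup hlow
  -- left side analysis
  have hYne : Y ≠ 0 := by
    rintro rfl
    rw [show (0:MvPolynomial (Fin n) k) ^ 3 - 0 = 0 by ring] at hE
    rw [← hE] at hS
    simp at hS
  by_cases hD : Y.totalDegree = 0
  · have : S.totalDegree ≤ 0 := by
      rw [← hE, sub_eq_add_neg]
      refine (totalDegree_add _ _).trans ?_
      have h1 : (Y ^ 3).totalDegree = 0 := by rw [cube_totalDegree hYne, hD]
      have h2 : (-Y).totalDegree = 0 := by rw [neg_totalDegree, hD]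
      omega
    omega
  · have h3 : (Y ^ 3 - Y).totalDegree = 3 * Y.totalDegree := by
      rw [sub_eq_add_neg, totalDegree_add_eq_left_of_totalDegree_lt, cube_totalDegree hYne]
      rw [neg_totalDegree, cube_totalDegree hYne]
      omega
    rw [← hE, h3] at hS
    omega

private lemma key : ∀ (Z Y : MvPolynomial (Fin n) k) (Xv : Fin n → MvPolynomial (Fin n) k),
    Y ^ 3 - Y * Z ^ 2 = ∑ i, X i * Xv i ^ 3 → ∀ j, Xv j = 0 := by
  intro Z
  induction Z using WfDvdMonoid.induction_on_irreducible with
  | zero =>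
    intro Y Xv hE j
    have := deriv_rel hE j
    rw [zero_mul] at this
    exact pow_eq_zero_iff (by norm_num) |>.mp this
  | unit u hu =>
    intro Y Xv hE j
    obtain ⟨u1, rfl⟩ := hu
    set v : MvPolynomial (Fin n) k := ((u1⁻¹ : (MvPolynomial (Fin n) k)ˣ) : MvPolynomial (Fin n) k)
      with hv
    have hvu : v * (u1 : MvPolynomial (Fin n) k) = 1 := u1.inv_mul
    have hE' : (v * Y) ^ 3 - (v * Y) * 1 ^ 2 = ∑ i, X i * (v * Xv i) ^ 3 := by
      have hsum : ∑ i, X i * (v * Xv i) ^ 3 = v ^ 3 * ∑ i, X i * Xv i ^ 3 := by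
        rw [Finset.mul_sum]
        exact Finset.sum_congr rfl fun i _ => by ring
      rw [hsum, ← hE]
      linear_combination (Y * v * (v * (u1 : MvPolynomial (Fin n) k) + 1)) * hvu
    have := case_one (v * Y) (fun i => v * Xv i) hE' j
    have hvne : v ≠ 0 := Units.ne_zero _
    rcases mul_eq_zero.mp this with h | h
    · exact absurd h hvne
    · exact h
  | mul a p ha hp IH =>
    intro Y Xv hE j
    have hprime : Prime p := (UniqueFactorizationMonoid.irreducible_iff_prime).mp hp
    have hXd : ∀ i, p ∣ Xv i := by
      intro i
      apply hprime.dvd_of_dvd_pow (n := 3)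
      rw [deriv_rel hE i]
      exact (dvd_mul_right p a).mul_right _
    have hYd : p ∣ Y := by
      apply hprime.dvd_of_dvd_pow (n := 3)
      have h1 : Y ^ 3 = Y * (p * a) ^ 2 + ∑ i, X i * Xv i ^ 3 := by
        rw [← hE]; ring
      rw [h1]
      refine dvd_add ?_ (Finset.dvd_sum fun i _ => ?_)
      · exact Dvd.dvd.mul_left (dvd_pow (dvd_mul_right p a) (by norm_num)) Y
      · exact Dvd.dvd.mul_left ((hXd i).trans (dvd_pow_self _ (by norm_num))) (X i)
    obtain ⟨Y₁, rfl⟩ := hYd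
    choose Xv₁ hXv₁ using hXd
    have hpne : p ≠ 0 := hp.ne_zero
    have hsum : ∑ i, X i * Xv i ^ 3 = p ^ 3 * ∑ i, X i * Xv₁ i ^ 3 := by
      rw [Finset.mul_sum]
      exact Finset.sum_congr rfl fun i _ => by rw [hXv₁ i]; ring
    have h2 : p ^ 3 * (Y₁ ^ 3 - Y₁ * a ^ 2) = p ^ 3 * ∑ i, X i * Xv₁ i ^ 3 := by
      rw [← hsum, ← hE]; ring
    have h3 := mul_left_cancel₀ (pow_ne_zero 3 hpne) h2
    have := IH Y₁ Xv₁ h3 j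
    rw [hXv₁ j, this, mul_zero]

end Aux

set_option maxHeartbeats 1000000 in
set_option synthInstance.maxHeartbeats 200000 in
/-- Let `k` be an algebraically closed field of characteristic 3 and
`K = k(t_1,…,t_n)` a purely transcendental extension.  The only `K`-points of the
cubic hypersurface `Y ⊂ ℙ^{n+1}`, `y³ − y z² = ∑ tᵢ xᵢ³`, are `(0:1:0:…:0)`,
`(1:1:0:…:0)` and `(1:−1:0:…:0)`: every nonzero solution `(y, z, x)` over `K` has
`x = 0` and `y = 0`, `y = z`, or `y = −z`. -/
theorem K_points_of_char3_cubic
    {k : Type*} [Field k] [IsAlgClosed k] [CharP k 3] {n : ℕ}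
    (K : Type*) [Field K] (e : FractionRing (MvPolynomial (Fin n) k) ≃+* K)
    (t : Fin n → K) (ht : ∀ i, t i =
      e (algebraMap (MvPolynomial (Fin n) k) (FractionRing (MvPolynomial (Fin n) k))
        (MvPolynomial.X i)))
    (y z : K) (x : Fin n → K) (hnz : ¬ (y = 0 ∧ z = 0 ∧ x = 0))
    (heq : y ^ 3 - y * z ^ 2 = ∑ i, t i * x i ^ 3) :
    x = 0 ∧ (y = 0 ∨ y = z ∨ y = -z) := by
  classical
  set R := MvPolynomial (Fin n) k
  set F := FractionRing R
  set A : R →+* F := algebraMap R F with hA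
  -- transfer the equation to F
  have h2 : (e.symm y) ^ 3 - (e.symm y) * (e.symm z) ^ 2
      = ∑ i, A (X i) * (e.symm (x i)) ^ 3 := by
    have := congrArg e.symm heq
    rw [map_sub, map_pow, map_mul, map_pow, map_sum] at this
    rw [this]
    refine Finset.sum_congr rfl fun i _ => ?_
    rw [map_mul, map_pow, ht i, RingEquiv.symm_apply_apply]
  -- common denominator
  obtain ⟨b, hb⟩ := IsLocalization.exist_integer_multiples_of_finite
    (nonZeroDivisors R) (fun i : Sum (Fin n) Bool => Sum.elim (fun i => e.symm (x i))
      (fun p => cond p (e.symm y) (e.symm z)) i)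
  obtain ⟨Y, hY'⟩ := hb (Sum.inr true)
  obtain ⟨Z, hZ'⟩ := hb (Sum.inr false)
  have hY : A Y = (b : MvPolynomial (Fin n) k) • e.symm y := hY'
  have hZ : A Z = (b : MvPolynomial (Fin n) k) • e.symm z := hZ'
  have hx : ∀ i : Fin n, ∃ Xp : R, A Xp = (b : R) • e.symm (x i) := fun i => hb (Sum.inl i)
  choose Xp hXp using hx
  have hbsmul : ∀ v : F, (b : R) • v = A (b : R) * v := fun v => Algebra.smul_def _ v
  have hpoly : Y ^ 3 - Y * Z ^ 2 = ∑ i, X i * Xp i ^ 3 := by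
    apply IsFractionRing.injective R F
    rw [map_sub, map_pow, map_mul, map_pow, map_sum]
    have hAY : A Y = A (b : R) * e.symm y := by rw [hY, hbsmul]
    have hAZ : A Z = A (b : R) * e.symm z := by rw [hZ, hbsmul]
    have hsum : ∑ i, A (X i) * A (Xp i) ^ 3
        = A (b:R) ^ 3 * ∑ i, A (X i) * (e.symm (x i)) ^ 3 := by
      rw [Finset.mul_sum]
      refine Finset.sum_congr rfl fun i _ => ?_
      rw [hXp i, hbsmul]; ring
    calc A Y ^ 3 - A Y * A Z ^ 2
        = A (b:R) ^ 3 * ((e.symm y) ^ 3 - (e.symm y) * (e.symm z) ^ 2) := by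
          rw [hAY, hAZ]; ring
      _ = A (b:R) ^ 3 * ∑ i, A (X i) * (e.symm (x i)) ^ 3 := by rw [h2]
      _ = ∑ i, A (X i) * A (Xp i) ^ 3 := hsum.symm
      _ = ∑ i, A (X i * Xp i ^ 3) := by
          refine Finset.sum_congr rfl fun i _ => ?_
          rw [map_mul, map_pow]
  have hXp0 : ∀ j, Xp j = 0 := key Z Y Xp hpoly
  have hbne : A (b : R) ≠ 0 := by
    intro h0
    exact nonZeroDivisors.coe_ne_zero b (IsFractionRing.injective R F (by rw [h0, map_zero]))
  have hx0 : ∀ i, x i = 0 := by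
    intro i
    have h1 : A (b : R) * e.symm (x i) = 0 := by
      rw [← hbsmul, ← hXp i, hXp0 i, map_zero]
    rcases mul_eq_zero.mp h1 with h | h
    · exact absurd h hbne
    · have := congrArg e h
      rwa [RingEquiv.apply_symm_apply, map_zero] at this
  have hxfun : x = 0 := funext fun i => hx0 i
  refine ⟨hxfun, ?_⟩
  have hsum0 : ∑ i, t i * x i ^ 3 = 0 := by
    refine Finset.sum_eq_zero fun i _ => by rw [hx0 i]; ring
  rw [hsum0, sub_eq_zero] at heq
  have hfac : y * ((y - z) * (y + z)) = 0 := by linear_combination heq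
  rcases mul_eq_zero.mp hfac with h | h
  · exact Or.inl h
  · rcases mul_eq_zero.mp h with h' | h'
    · exact Or.inr (Or.inl (sub_eq_zero.mp h'))
    · exact Or.inr (Or.inr (eq_neg_of_add_eq_zero_left h'))
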